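/- For every natural number n ≥ 1, the coefficient of X^{2^n − 1} in G n, viewed as a polynomial in the single variable X with coefficients in ℤ[k, b, Y], equals k^{2^n − n − 1}·Y. Equivalently, the only exponent vector in the support of G n whose X-exponent equals 2^n − 1 is the monomial k^{2^n − n − 1}·X^{2^n − 1}·Y, and it occurs with coefficient 1. -/

import Mathlib

open MvPolynomial

/-- The pair `(Fₙ, Gₙ)` in `ℤ[k, b, X, Y]` (variables `0 ↦ k`, `1 ↦ b`, `2 ↦ X`, `3 ↦ Y`),
defined by `F 1 = k (X² + b Y²)`, `G 1 = X Y`,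
`F (n+1) = k ((F n)² + b (G n)²)`, `G (n+1) = (F n) (G n)`. -/
noncomputable def FG : ℕ → MvPolynomial (Fin 4) ℤ × MvPolynomial (Fin 4) ℤ
  | 0 => (0, 0)
  | 1 => (X 0 * (X 2 ^ 2 + X 1 * X 3 ^ 2), X 2 * X 3)
  | n + 2 =>
      (X 0 * ((FG (n + 1)).1 ^ 2 + X 1 * (FG (n + 1)).2 ^ 2),
        (FG (n + 1)).1 * (FG (n + 1)).2)

noncomputable def F (n : ℕ) : MvPolynomial (Fin 4) ℤ := (FG n).1
noncomputable def G (n : ℕ) : MvPolynomial (Fin 4) ℤ := (FG n).2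

/-- `p` has all `X`-exponents bounded by `a`. -/
def Bd (p : MvPolynomial (Fin 4) ℤ) (a : ℕ) : Prop := ∀ m ∈ p.support, m 2 ≤ a

lemma Bd.mul {p q a b} (hp : Bd p a) (hq : Bd q b) : Bd (p * q) (a + b) := by
  intro m hm
  have := MvPolynomial.support_mul p q hm
  rw [Finset.mem_add] at this
  obtain ⟨x, hx, y, hy, rfl⟩ := this
  have := hp x hx
  have := hq y hy
  simp only [Finsupp.add_apply]
  omega

lemma Bd_X {i : Fin 4} (a : ℕ) (h : (Finsupp.single i 1) 2 ≤ a) : Bd (X i) a := by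
  intro m hm
  rw [MvPolynomial.support_X, Finset.mem_singleton] at hm
  subst hm; exact h

lemma Bd.coeff_zero {p a} (h : Bd p a) {m : Fin 4 →₀ ℕ} (hm : a < m 2) :
    coeff m p = 0 := by
  by_contra h0
  exact absurd (h m (mem_support_iff.mpr h0)) (by omega)

/-- `p` has a unique monomial of maximal `X`-exponent `a`, namely `ma`, with coefficient 1. -/
structure XLead (p : MvPolynomial (Fin 4) ℤ) (a : ℕ) (ma : Fin 4 →₀ ℕ) : Prop where
  bd : Bd p a
  uniq : ∀ m ∈ p.support, m 2 = a → m = ma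
  top : coeff ma p = 1
  ha : ma 2 = a

set_option maxHeartbeats 1000000 in
lemma XLead.mul {p q a b ma mb} (hp : XLead p a ma) (hq : XLead q b mb) :
    XLead (p * q) (a + b) (ma + mb) where
  bd := hp.bd.mul hq.bd
  uniq := by
    intro m hm hm2
    have := MvPolynomial.support_mul p q hm
    rw [Finset.mem_add] at this
    obtain ⟨x, hx, y, hy, rfl⟩ := this
    have h1 := hp.bd x hx
    have h2 := hq.bd y hy
    rw [Finsupp.add_apply] at hm2
    have hxa : x 2 = a := by omega
    have hyb : y 2 = b := by omega
    rw [hp.uniq x hx hxa, hq.uniq y hy hyb]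
  top := by
    have hma0 : coeff ma (p - monomial ma 1) = 0 := by
      rw [coeff_sub, coeff_monomial, if_pos rfl, hp.top, sub_self]
    have hsmall : ∀ x ∈ (p - monomial ma 1).support, x 2 < a := by
      intro x hx
      have hxne : x ≠ ma := fun h => by rw [h] at hx; exact (mem_support_iff.mp hx) hma0
      have hcx : coeff x p ≠ 0 := by
        intro h0
        have hx' := mem_support_iff.mp hx
        rw [coeff_sub, h0, coeff_monomial, if_neg (fun h => hxne h.symm), sub_zero] at hx'
        exact hx' rfl
      have hle := hp.bd x (mem_support_iff.mpr hcx)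
      rcases Nat.lt_or_ge (x 2) a with h | h
      · exact h
      · exact absurd (hp.uniq x (mem_support_iff.mpr hcx) (by omega)) hxne
    have hdecomp : p * q = monomial ma 1 * q + (p - monomial ma 1) * q := by ring
    have hz : coeff (ma + mb) ((p - monomial ma 1) * q) = 0 := by
      by_contra h0
      have hmem := MvPolynomial.support_mul _ q (mem_support_iff.mpr h0)
      rw [Finset.mem_add] at hmem
      obtain ⟨x, hx, y, hy, hxy⟩ := hmem
      have h1 := hsmall x hx
      have h2 := hq.bd y hy
      have h3 := DFunLike.congr_fun hxy (2 : Fin 4)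
      rw [Finsupp.add_apply, Finsupp.add_apply, hp.ha, hq.ha] at h3
      omega
    rw [hdecomp, coeff_add, coeff_monomial_mul, hq.top, hz, mul_one, add_zero]
  ha := by rw [Finsupp.add_apply, hp.ha, hq.ha]

lemma XLead.add_small {p q a b ma} (hp : XLead p a ma) (hq : Bd q b) (hb : b < a) :
    XLead (p + q) a ma where
  bd := by
    intro m hm
    rcases Finset.mem_union.mp (MvPolynomial.support_add hm) with h | h
    · exact hp.bd m h
    · have := hq m h; omega
  uniq := by
    intro m hm hm2
    rcases Finset.mem_union.mp (MvPolynomial.support_add hm) with h | h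
    · exact hp.uniq m h hm2
    · have := hq m h; omega
  top := by
    rw [coeff_add, hp.top, hq.coeff_zero (by rw [hp.ha]; omega), add_zero]
  ha := hp.ha

lemma XLead.congr {p a ma a' ma'} (hp : XLead p a ma) (h1 : a = a') (h2 : ma = ma') :
    XLead p a' ma' := h1 ▸ h2 ▸ hp

lemma XLead_monomial (m : Fin 4 →₀ ℕ) : XLead (monomial m (1 : ℤ)) (m 2) m where
  bd := by
    intro x hx
    rw [support_monomial, if_neg one_ne_zero, Finset.mem_singleton] at hx
    subst hx; exact le_refl _
  uniq := by
    intro x hx _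
    rw [support_monomial, if_neg one_ne_zero, Finset.mem_singleton] at hx
    exact hx
  top := by rw [coeff_monomial, if_pos rfl]
  ha := rfl

lemma XLead_X (i : Fin 4) : XLead (X i) ((Finsupp.single i 1) 2) (Finsupp.single i 1) := by
  exact XLead_monomial (Finsupp.single i 1)

noncomputable def mF (n : ℕ) : Fin 4 →₀ ℕ := Finsupp.single 0 (2 ^ n - 1) + Finsupp.single 2 (2 ^ n)

noncomputable def mG (n : ℕ) : Fin 4 →₀ ℕ :=
  Finsupp.single 0 (2 ^ n - n - 1) + Finsupp.single 2 (2 ^ n - 1) + Finsupp.single 3 1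

lemma two_le_pow {n : ℕ} (hn : 1 ≤ n) : 2 ≤ 2 ^ n := by
  calc 2 = 2 ^ 1 := rfl
  _ ≤ 2 ^ n := Nat.pow_le_pow_right (by norm_num) hn

lemma key (n : ℕ) (hn : 1 ≤ n) :
    XLead (F n) (2 ^ n) (mF n) ∧ XLead (G n) (2 ^ n - 1) (mG n) := by
  induction n with
  | zero => omega
  | succ n ih =>
    rcases Nat.eq_or_lt_of_le hn with h1 | h1
    · -- base case n + 1 = 1
      have hn0 : n = 0 := by omega
      subst hn0
      constructor
      · have hF1 : F 1 = X 0 * (X 2 ^ 2 + X 1 * X 3 ^ 2) := rfl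
        rw [hF1, pow_two, pow_two]
        have h2 : XLead (X 2 * X 2 : MvPolynomial (Fin 4) ℤ)
            ((Finsupp.single (2:Fin 4) 1) 2 + (Finsupp.single (2:Fin 4) 1) 2)
            (Finsupp.single 2 1 + Finsupp.single 2 1) := (XLead_X 2).mul (XLead_X 2)
        have hsm : Bd (X 1 * (X 3 * X 3) : MvPolynomial (Fin 4) ℤ) (0 + (0 + 0)) :=
          (Bd_X _ (by simp [Finsupp.single_apply])).mul
            ((Bd_X _ (by simp [Finsupp.single_apply])).mul
              (Bd_X _ (by simp [Finsupp.single_apply])))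
        have hadd := h2.add_small hsm (by simp [Finsupp.single_apply])
        have := (XLead_X 0).mul hadd
        refine this.congr ?_ ?_
        · simp [Finsupp.single_apply]
        · unfold mF
          ext i
          fin_cases i <;> simp [Finsupp.single_apply]
      · have hG1 : G 1 = X 2 * X 3 := rfl
        rw [hG1]
        have := (XLead_X 2).mul (XLead_X 3)
        refine this.congr ?_ ?_
        · simp [Finsupp.single_apply]
        · unfold mG
          ext i
          fin_cases i <;> simp [Finsupp.single_apply]
    · -- inductive step: 1 ≤ n
      have hn' : 1 ≤ n := by omega
      obtain ⟨hF, hG⟩ := ih hn'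
      obtain ⟨m, rfl⟩ : ∃ m, n = m + 1 := ⟨n - 1, by omega⟩
      have h2n := two_le_pow hn'
      have hpow : (2 : ℕ) ^ (m + 1 + 1) = 2 ^ (m + 1) + 2 ^ (m + 1) := by
        rw [pow_succ]; ring
      have hp4 : (2 : ℕ) ^ (m + 1 + 1) = 4 * 2 ^ m := by ring
      have hp2 : (2 : ℕ) ^ (m + 1) = 2 * 2 ^ m := by ring
      have hm2 : (2 : ℕ) ≤ 2 ^ (m + 1) := h2n
      have hlt1 : m + 1 < 2 ^ (m + 1) := Nat.lt_two_pow_self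
      have hlt2 : m + 1 + 1 < 2 ^ (m + 1 + 1) := Nat.lt_two_pow_self
      constructor
      · have hFs : F (m + 1 + 1) = X 0 * (F (m + 1) ^ 2 + X 1 * G (m + 1) ^ 2) := rfl
        rw [hFs, pow_two, pow_two]
        have hsq := hF.mul hF
        have hsm : Bd (X 1 * (G (m + 1) * G (m + 1)) : MvPolynomial (Fin 4) ℤ)
            (0 + ((2 ^ (m + 1) - 1) + (2 ^ (m + 1) - 1))) :=
          (Bd_X _ (by simp [Finsupp.single_apply])).mul (hG.bd.mul hG.bd)
        have hadd := hsq.add_small hsm (by omega)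
        have := (XLead_X 0).mul hadd
        refine this.congr ?_ ?_
        · simp [Finsupp.single_apply]; omega
        · unfold mF
          ext i
          fin_cases i <;>
            simp [Finsupp.single_apply, mF, Finsupp.add_apply] <;> omega
      · have hGs : G (m + 1 + 1) = F (m + 1) * G (m + 1) := rfl
        have := hF.mul hG
        refine this.congr (by omega) ?_
        unfold mF mG
        ext i
        fin_cases i <;>
          simp [Finsupp.single_apply, Finsupp.add_apply] <;> omega

/-- The coefficient of `X^(2^n - 1)` in `G n`: the unique exponent vector in the support of
`G n` with `X`-exponent `2^n - 1` is that of `k^(2^n - n - 1) * X^(2^n - 1) * Y`,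
with coefficient `1`. -/
theorem coeff_X_pow_G (n : ℕ) (hn : 1 ≤ n) :
    (∀ m ∈ (G n).support, m 2 = 2 ^ n - 1 →
        m = Finsupp.single (0 : Fin 4) (2 ^ n - n - 1) + Finsupp.single 2 (2 ^ n - 1) +
          Finsupp.single 3 1) ∧
    coeff
      (Finsupp.single (0 : Fin 4) (2 ^ n - n - 1) + Finsupp.single 2 (2 ^ n - 1) +
        Finsupp.single 3 1) (G n) = 1 := by
  obtain ⟨_, hG⟩ := key n hn
  exact ⟨hG.uniq, hG.top⟩
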